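/- Let α_1 ≥ ... ≥ α_n be a nonincreasing integer sequence with values in {⌈s/n⌉, ⌊s/n⌋} summing to s, and let β_1 ≥ ... ≥ β_n be any nonincreasing nonnegative integer sequence with ∑_i β_i ≥ s. Then for every ℓ ∈ [n], ∑_{i=1}^ℓ α_i ≤ ∑_{i=1}^ℓ β_i. -/

import Mathlib

/-- if `α` is a nonincreasing sequence with values in
`{⌈s/n⌉, ⌊s/n⌋}` summing to `s`, and `β` is any nonincreasing nonnegative integer
sequence with total at least `s`, then every prefix sum of `α` is at most the
corresponding prefix sum of `β`. -/
theorem balanced_profile_lorenz_dominates (n s : ℕ) (hn : 1 ≤ n)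
    (α β : Fin n → ℕ)
    (hαmono : ∀ i j : Fin n, i ≤ j → α j ≤ α i)
    (hαval : ∀ i, α i = (s + n - 1) / n ∨ α i = s / n)
    (hαsum : ∑ i, α i = s)
    (hβmono : ∀ i j : Fin n, i ≤ j → β j ≤ β i)
    (hβsum : s ≤ ∑ i, β i) :
    ∀ ℓ : ℕ, ∑ i ∈ Finset.univ.filter (fun i : Fin n => (i : ℕ) < ℓ), α i ≤
      ∑ i ∈ Finset.univ.filter (fun i : Fin n => (i : ℕ) < ℓ), β i := by
  have hceil : (s + n - 1) / n ≤ s / n + 1 := by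
    calc (s + n - 1) / n ≤ (s + n) / n := Nat.div_le_div_right (by omega)
      _ = s / n + 1 := Nat.add_div_right _ (by omega)
  have hfloor : ∀ i, s / n ≤ α i := by
    intro i
    rcases hαval i with h | h
    · rw [h]; exact Nat.div_le_div_right (by omega)
    · rw [h]
  have hαub : ∀ i, α i ≤ s / n + 1 := by
    intro i
    rcases hαval i with h | h
    · rw [h]; exact hceil
    · rw [h]; omega
  by_contra hcon
  push_neg at hcon
  classical
  obtain ⟨ℓ, hℓ, hmin⟩ : ∃ ℓ : ℕ,
      (∑ i ∈ Finset.univ.filter (fun i : Fin n => (i : ℕ) < ℓ), β i <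
        ∑ i ∈ Finset.univ.filter (fun i : Fin n => (i : ℕ) < ℓ), α i) ∧
      ∀ m < ℓ, ¬ (∑ i ∈ Finset.univ.filter (fun i : Fin n => (i : ℕ) < m), β i <
        ∑ i ∈ Finset.univ.filter (fun i : Fin n => (i : ℕ) < m), α i) :=
    ⟨Nat.find hcon, Nat.find_spec hcon, fun m hm => Nat.find_min hcon hm⟩
  have hℓpos : 1 ≤ ℓ := by
    by_contra h
    have h0 : ℓ = 0 := by omega
    rw [h0] at hℓ
    simp at hℓ
  have hℓn : ℓ < n := by
    by_contra h
    push_neg at h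
    have huniv : Finset.univ.filter (fun i : Fin n => (i : ℕ) < ℓ) = Finset.univ := by
      apply Finset.filter_true_of_mem
      intro i _
      exact lt_of_lt_of_le i.isLt h
    rw [huniv, hαsum] at hℓ
    omega
  set k : Fin n := ⟨ℓ - 1, by omega⟩ with hk
  have hsplit : ∀ f : Fin n → ℕ,
      ∑ i ∈ Finset.univ.filter (fun i : Fin n => (i : ℕ) < ℓ), f i =
      ∑ i ∈ Finset.univ.filter (fun i : Fin n => (i : ℕ) < ℓ - 1), f i + f k := by
    intro f
    have hkv : (k : ℕ) = ℓ - 1 := rfl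
    have heq : Finset.univ.filter (fun i : Fin n => (i : ℕ) < ℓ) =
        insert k (Finset.univ.filter (fun i : Fin n => (i : ℕ) < ℓ - 1)) := by
      ext i
      simp only [Finset.mem_filter, Finset.mem_insert, Finset.mem_univ, true_and,
        Fin.ext_iff]
      constructor
      · intro hi
        rcases Nat.lt_or_ge (i : ℕ) (ℓ - 1) with h | h
        · exact Or.inr h
        · exact Or.inl (by omega)
      · rintro (h | h) <;> omega
    rw [heq, Finset.sum_insert (by simp; omega)]
    omega
  have hprev : ∑ i ∈ Finset.univ.filter (fun i : Fin n => (i : ℕ) < ℓ - 1), α i ≤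
      ∑ i ∈ Finset.univ.filter (fun i : Fin n => (i : ℕ) < ℓ - 1), β i :=
    Nat.le_of_not_lt (hmin (ℓ - 1) (by omega))
  have hβk : β k < α k := by
    have h1 := hsplit α
    have h2 := hsplit β
    omega
  have hβk' : β k ≤ s / n := by
    have := hαub k
    omega
  have hsuff : ∑ i ∈ Finset.univ.filter (fun i : Fin n => ¬ (i : ℕ) < ℓ), β i ≤
      ∑ i ∈ Finset.univ.filter (fun i : Fin n => ¬ (i : ℕ) < ℓ), α i := by
    apply Finset.sum_le_sum
    intro i hi
    simp only [Finset.mem_filter, Finset.mem_univ, true_and, not_lt] at hi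
    have hki : k ≤ i := by
      have hkv : (k : ℕ) = ℓ - 1 := rfl
      rw [Fin.le_def]
      omega
    calc β i ≤ β k := hβmono k i hki
      _ ≤ s / n := hβk'
      _ ≤ α i := hfloor i
  have hα : ∑ i ∈ Finset.univ.filter (fun i : Fin n => (i : ℕ) < ℓ), α i +
      ∑ i ∈ Finset.univ.filter (fun i : Fin n => ¬ (i : ℕ) < ℓ), α i = s := by
    rw [Finset.sum_filter_add_sum_filter_not]
    exact hαsum
  have hβ : ∑ i ∈ Finset.univ.filter (fun i : Fin n => (i : ℕ) < ℓ), β i +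
      ∑ i ∈ Finset.univ.filter (fun i : Fin n => ¬ (i : ℕ) < ℓ), β i = ∑ i, β i := by
    rw [Finset.sum_filter_add_sum_filter_not]
  omega
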